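/- Priority-to-upstream strategy optimality for the linear network: suppose cumulative flows Λ satisfy, for j = J down to 1, that ∫₀^t Λ_j(M(s))ds is maximal subject to M_j(t) = M_j(0)+E_j(t)−∫₀^t Λ_j(M(s))ds ≥ 0 and Σ_{i=j}^J Λ_i(M(t)) ≤ C_j with equality whenever M_j(t) > 0. Then for every j and t, the cumulative flow along link j, ∫₀^t Σ_{i=j}^J Λ_i(M(s)) ds, is maximal among all admissible policies; in particular the strategy minimizes Σ_j M_j(t) for all t. -/

import Mathlib

open Finset Set

/-- An admissible ramp metering policy for the linear network, described by its
cumulative outputs `S t i` from line `i` up to time `t`: outputs start at zero,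
are nondecreasing, never exceed the work `M0 i + E t i` that has arrived at line `i`
(so line sizes `M_i(t) = M0 i + E t i - S t i` stay nonnegative), and the total flow
through section `j` (used by the lines `i ≥ j`) respects the capacity `C j`. -/
def AdmissibleLN {J : ℕ} (C : Fin J → ℝ) (M0 : Fin J → ℝ)
    (E : ℝ → Fin J → ℝ) (S : ℝ → Fin J → ℝ) : Prop :=
  (∀ i, S 0 i = 0) ∧
  (∀ i, MonotoneOn (fun t => S t i) (Ici 0)) ∧
  (∀ i t, 0 ≤ t → S t i ≤ M0 i + E t i) ∧
  (∀ j : Fin J, ∀ s t : ℝ, 0 ≤ s → s ≤ t →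
    ∑ i ∈ univ.filter (fun i => j ≤ i), (S t i - S s i) ≤ C j * (t - s))

lemma aux_sup_argument (Cj : ℝ) (hCj : 0 < Cj) (f g : ℝ → ℝ) (t : ℝ) (ht : 0 ≤ t)
    (h00 : g 0 ≤ f 0)
    (hfm : ∀ s u : ℝ, 0 ≤ s → s ≤ u → f s ≤ f u)
    (hgcap : ∀ s u : ℝ, 0 ≤ s → s ≤ u → g u - g s ≤ Cj * (u - s))
    (hgr : ∀ u : ℝ, 0 ≤ u → u ≤ t → (∀ v, u ≤ v → v ≤ t → f v < g v) →
      f t - f u = Cj * (t - u)) :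
    g t ≤ f t := by
  by_contra hcon
  push_neg at hcon
  set A : Set ℝ := {s | (s ∈ Set.Icc 0 t) ∧ g s ≤ f s} with hA
  have hA0 : (0:ℝ) ∈ A := ⟨⟨le_refl 0, ht⟩, h00⟩
  have hAne : A.Nonempty := ⟨0, hA0⟩
  have hbdd : BddAbove A := ⟨t, fun s hs => hs.1.2⟩
  set t0 := sSup A with ht0def
  have ht00 : 0 ≤ t0 := le_csSup hbdd hA0
  have ht0t : t0 ≤ t := csSup_le hAne fun s hs => hs.1.2
  have hstep1 : g t0 ≤ f t0 := by
    have h1 : ∀ ε : ℝ, 0 < ε → g t0 ≤ f t0 + ε := by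
      intro ε hε
      obtain ⟨s, hsA, hs⟩ := exists_lt_of_lt_csSup hAne
        (show t0 - ε/Cj < t0 by have := div_pos hε hCj; linarith)
      have hs0 : 0 ≤ s := hsA.1.1
      have hst0 : s ≤ t0 := le_csSup hbdd hsA
      have hc := hgcap s t0 hs0 hst0
      have hfs : f s ≤ f t0 := hfm s t0 hs0 hst0
      have h3 : t0 - s ≤ ε / Cj := by linarith
      have h4 : Cj * (t0 - s) ≤ ε := by
        have h5 := mul_le_mul_of_nonneg_left h3 hCj.le
        have h6 : Cj * (ε / Cj) = ε := by field_simp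
        linarith
      linarith [hsA.2]
    by_contra h; push_neg at h
    have := h1 ((g t0 - f t0)/2) (by linarith)
    linarith
  have ht0lt : t0 < t := by
    rcases lt_or_eq_of_le ht0t with h|h
    · exact h
    · rw [h] at hstep1; linarith
  have h2 : ∀ ε : ℝ, 0 < ε → g t ≤ f t + ε := by
    intro ε hε
    set u := min t (t0 + ε/Cj) with hu
    have ht0u : t0 < u := lt_min ht0lt (by have := div_pos hε hCj; linarith)
    have hut : u ≤ t := min_le_left _ _
    have hu0 : 0 ≤ u := ht00.trans ht0u.le
    have huv : ∀ v, u ≤ v → v ≤ t → f v < g v := by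
      intro v hv1 hv2
      by_contra hvc; push_neg at hvc
      have hvA : v ∈ A := ⟨⟨le_trans hu0 hv1, hv2⟩, hvc⟩
      have : v ≤ t0 := le_csSup hbdd hvA
      linarith [lt_of_lt_of_le ht0u hv1]
    have hgr' := hgr u hu0 hut huv
    have hc := hgcap t0 t ht00 ht0t
    have hfu : f t0 ≤ f u := hfm t0 u ht00 ht0u.le
    have h3 : u - t0 ≤ ε / Cj := by
      have : u ≤ t0 + ε/Cj := min_le_right _ _
      linarith
    have h4 : Cj * (u - t0) ≤ ε := by
      have h5 := mul_le_mul_of_nonneg_left h3 hCj.le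
      have h6 : Cj * (ε / Cj) = ε := by field_simp
      linarith
    have hring : Cj * (t - t0) = Cj * (t - u) + Cj * (u - t0) := by ring
    linarith
  by_contra _
  have := h2 ((g t - f t)/2) (by linarith)
  linarith

/-- Optimality of the priority-to-upstream strategy for the linear network: if the
admissible policy `Sstar` serves section `j` at full capacity `C j` whenever line `j`
is nonempty (for `j = J` down to `1`), then for every section `j` and time `t` the
cumulative flow through section `j` under `Sstar` is maximal among all admissible
policies; in particular `Sstar` minimizes the total line size `Σ_j M_j(t)` for all `t`. -/
theorem priority_to_upstream_optimal {J : ℕ}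
    (C : Fin J → ℝ) (hCpos : ∀ j, 0 < C j) (hCanti : StrictAnti C)
    (M0 : Fin J → ℝ) (hM0 : ∀ i, 0 ≤ M0 i)
    (E : ℝ → Fin J → ℝ) (hE0 : ∀ i, E 0 i = 0)
    (hEmono : ∀ i, MonotoneOn (fun t => E t i) (Ici 0))
    (Sstar : ℝ → Fin J → ℝ) (hstar : AdmissibleLN C M0 E Sstar)
    (hgreedy : ∀ j : Fin J, ∀ s t : ℝ, 0 ≤ s → s ≤ t →
      (∀ u, s ≤ u → u ≤ t → 0 < M0 j + E u j - Sstar u j) →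
      ∑ i ∈ univ.filter (fun i => j ≤ i), (Sstar t i - Sstar s i) = C j * (t - s)) :
    ∀ S : ℝ → Fin J → ℝ, AdmissibleLN C M0 E S →
      (∀ j : Fin J, ∀ t : ℝ, 0 ≤ t →
        ∑ i ∈ univ.filter (fun i => j ≤ i), S t i ≤
          ∑ i ∈ univ.filter (fun i => j ≤ i), Sstar t i) ∧
      (∀ t : ℝ, 0 ≤ t →
        ∑ i, (M0 i + E t i - Sstar t i) ≤ ∑ i, (M0 i + E t i - S t i)) := by
  
  intro S hS
  obtain ⟨hS0, hSmono, hSle, hScap⟩ := hS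
  obtain ⟨hs0, hsmono, hsle, hscap⟩ := hstar
  have key : ∀ n : ℕ, ∀ j : Fin J, J - j.val ≤ n → ∀ t : ℝ, 0 ≤ t →
      ∑ i ∈ univ.filter (fun i => j ≤ i), S t i ≤
      ∑ i ∈ univ.filter (fun i => j ≤ i), Sstar t i := by
    intro n
    induction n with
    | zero =>
      intro j hj
      exact absurd hj (by have := j.isLt; omega)
    | succ n ih =>
      intro j hj t ht
      -- the tail sums (over i > j) are comparable by the inductive hypothesis
      have htail : ∀ v : ℝ, 0 ≤ v →
          ∑ i ∈ univ.filter (fun i => j < i), S v i ≤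
          ∑ i ∈ univ.filter (fun i => j < i), Sstar v i := by
        by_cases h : j.val + 1 < J
        · have heq : univ.filter (fun i : Fin J => j < i)
              = univ.filter (fun i => (⟨j.val + 1, h⟩ : Fin J) ≤ i) := by
            ext i
            simp only [Finset.mem_filter, Finset.mem_univ, true_and]
            exact Iff.rfl
          intro v hv
          rw [heq]
          exact ih ⟨j.val + 1, h⟩ (show J - (j.val + 1) ≤ n by omega) v hv
        · have heq : univ.filter (fun i : Fin J => j < i) = ∅ := by
            ext i
            simp only [Finset.mem_filter, Finset.mem_univ, true_and,
              Finset.notMem_empty, iff_false]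
            intro hlt
            have h1 : j.val < i.val := hlt
            have h2 := i.isLt
            omega
          intro v hv
          simp [heq]
      have hins : univ.filter (fun i : Fin J => j ≤ i)
          = insert j (univ.filter (fun i => j < i)) := by
        ext i
        simp only [Finset.mem_filter, Finset.mem_univ, true_and, Finset.mem_insert]
        constructor
        · intro h
          rcases eq_or_lt_of_le h with h | h
          · exact Or.inl h.symm
          · exact Or.inr h
        · intro h
          rcases h with h | h
          · exact le_of_eq h.symm
          · exact le_of_lt h
      have hnot : j ∉ univ.filter (fun i : Fin J => j < i) := by
        simp only [Finset.mem_filter, Finset.mem_univ, true_and]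
        exact lt_irrefl j
      refine aux_sup_argument (C j) (hCpos j)
        (fun u => ∑ i ∈ univ.filter (fun i => j ≤ i), Sstar u i)
        (fun u => ∑ i ∈ univ.filter (fun i => j ≤ i), S u i) t ht ?_ ?_ ?_ ?_
      · show ∑ i ∈ univ.filter (fun i => j ≤ i), S 0 i ≤
            ∑ i ∈ univ.filter (fun i => j ≤ i), Sstar 0 i
        simp [hS0, hs0]
      · intro s u hs hsu
        exact Finset.sum_le_sum fun i _ => hsmono i hs (hs.trans hsu) hsu
      · intro s u hs hsu
        show (∑ i ∈ univ.filter (fun i => j ≤ i), S u i) -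
            (∑ i ∈ univ.filter (fun i => j ≤ i), S s i) ≤ C j * (u - s)
        have := hScap j s u hs hsu
        rw [Finset.sum_sub_distrib] at this
        exact this
      · intro u hu hut hlt
        have hM : ∀ v, u ≤ v → v ≤ t → 0 < M0 j + E v j - Sstar v j := by
          intro v hv1 hv2
          have h1 := hlt v hv1 hv2
          have h2 := htail v (hu.trans hv1)
          have h3 := hSle j v (hu.trans hv1)
          rw [hins, Finset.sum_insert hnot, Finset.sum_insert hnot] at h1
          linarith
        have := hgreedy j u t hu hut hM
        rw [Finset.sum_sub_distrib] at this
        exact this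
  refine ⟨fun j t ht => key J j (Nat.sub_le _ _) t ht, ?_⟩
  intro t ht
  have hmain : ∑ i, S t i ≤ ∑ i, Sstar t i := by
    rcases Nat.eq_zero_or_pos J with hJ | hJ
    · subst hJ; simp
    · have h0 := key J ⟨0, hJ⟩ (Nat.sub_le _ _) t ht
      have heq : univ.filter (fun i : Fin J => (⟨0, hJ⟩ : Fin J) ≤ i)
          = (Finset.univ : Finset (Fin J)) := by
        apply Finset.filter_true_of_mem
        intro i _
        exact Fin.le_def.mpr (Nat.zero_le _)
      rwa [heq] at h0
  have e1 : ∑ i, (M0 i + E t i - Sstar t i)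
      = (∑ i, (M0 i + E t i)) - ∑ i, Sstar t i := Finset.sum_sub_distrib _ _
  have e2 : ∑ i, (M0 i + E t i - S t i)
      = (∑ i, (M0 i + E t i)) - ∑ i, S t i := Finset.sum_sub_distrib _ _
  linarith
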